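/- Let q ∈ (0,1), m ≥ 2, and 0 ≤ j ≤ m−2. For a fixed input x with B(j) ≤ x < B(j+1), the probabilities Pr(Q(x)=i) given by the RQM output formula are nonnegative for all i ∈ {0,...,m−1} and sum to 1. -/

import Mathlib

/-- The evenly spaced quantization levels `B i = -X + 2iX/(m-1)` on `[-X, X]`. -/
noncomputable def Bgrid (X : ℝ) (m : ℕ) (i : ℕ) : ℝ := -X + 2 * i * X / (m - 1)

/-- The index `j` such that `x ∈ [B j, B (j+1))`. -/
noncomputable def jIdx (X : ℝ) (m : ℕ) (x : ℝ) : ℕ :=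
  ⌊(x + X) * (m - 1) / (2 * X)⌋₊

/-- The output distribution of the Randomized Quantization Mechanism
(Lemma 2 of the paper), parametrized by the bin index `j` with
`x ∈ [B j, B (j+1))`: the probability that the mechanism outputs level `i`. -/
noncomputable def rqmProbJ (X : ℝ) (m : ℕ) (q : ℝ) (j : ℕ) (x : ℝ) (i : ℕ) : ℝ :=
  let B := Bgrid X m
  if i = 0 then
    (1-q)^j * ((1-q)^(m-j-2) * (B (m-1) - x) / (B (m-1) - B i)
      + ∑ k ∈ Finset.Ico (j+1) (m-1), q * (1-q)^(k-j-1) * (B k - x) / (B k - B i))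
  else if i ≤ j then
    q * (1-q)^(j-i) * ((1-q)^(m-j-2) * (B (m-1) - x) / (B (m-1) - B i)
      + ∑ k ∈ Finset.Ico (j+1) (m-1), q * (1-q)^(k-j-1) * (B k - x) / (B k - B i))
  else if i = m - 1 then
    (1-q)^(i-j-1) * ((1-q)^j * (x - B 0) / (B i - B 0)
      + ∑ k ∈ Finset.Icc 1 j, q * (1-q)^(j-k) * (x - B k) / (B i - B k))
  else
    q * (1-q)^(i-j-1) * ((1-q)^j * (x - B 0) / (B i - B 0)
      + ∑ k ∈ Finset.Icc 1 j, q * (1-q)^(j-k) * (x - B k) / (B i - B k))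

/-- The output distribution of the Randomized Quantization Mechanism on
input `x`. -/
noncomputable def rqmProb (X : ℝ) (m : ℕ) (q : ℝ) (x : ℝ) (i : ℕ) : ℝ :=
  rqmProbJ X m q (jIdx X m x) x i

/-! ### Auxiliary material -/

noncomputable def wlo (q : ℝ) (j i : ℕ) : ℝ :=
  if i = 0 then (1-q)^j else q*(1-q)^(j-i)

noncomputable def whi (q : ℝ) (m j k : ℕ) : ℝ :=
  if k = m-1 then (1-q)^(m-j-2) else q*(1-q)^(k-j-1)

lemma geom_aux (q : ℝ) (n : ℕ) :
    ∑ t ∈ Finset.range n, q*(1-q)^t = 1 - (1-q)^n := by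
  induction n with
  | zero => simp
  | succ n ih => rw [Finset.sum_range_succ, ih, pow_succ]; ring

lemma Bgrid_sub (X : ℝ) (m : ℕ) (k i : ℕ) :
    Bgrid X m k - Bgrid X m i = 2*((k:ℝ)-(i:ℝ))*X/((m:ℝ)-1) := by
  unfold Bgrid; ring

lemma Bgrid_lt (X : ℝ) (hX : 0 < X) (m : ℕ) (hm : 2 ≤ m) {i k : ℕ} (h : i < k) :
    Bgrid X m i < Bgrid X m k := by
  have hm' : (2:ℝ) ≤ (m:ℝ) := by exact_mod_cast hm
  have hik : (i:ℝ) < (k:ℝ) := by exact_mod_cast h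
  have hpos : 0 < 2*((k:ℝ)-(i:ℝ))*X/((m:ℝ)-1) :=
    div_pos (by nlinarith) (by linarith)
  have := Bgrid_sub X m k i
  linarith

lemma Bgrid_le (X : ℝ) (hX : 0 < X) (m : ℕ) (hm : 2 ≤ m) {i k : ℕ} (h : i ≤ k) :
    Bgrid X m i ≤ Bgrid X m k := by
  rcases eq_or_lt_of_le h with rfl | h
  · exact le_rfl
  · exact (Bgrid_lt X hX m hm h).le

lemma ico_split {j m : ℕ} (h : j + 1 ≤ m - 1) (hm : 1 ≤ m) (f : ℕ → ℝ) :
    ∑ k ∈ Finset.Ico (j+1) m, f k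
      = (∑ k ∈ Finset.Ico (j+1) (m-1), f k) + f (m-1) := by
  obtain ⟨M, rfl⟩ : ∃ M, m = M+1 := ⟨m-1, by omega⟩
  simp only [Nat.add_sub_cancel] at h ⊢
  exact Finset.sum_Ico_succ_top h f

lemma range_split {j : ℕ} (f : ℕ → ℝ) :
    ∑ k ∈ Finset.range (j+1), f k = f 0 + ∑ k ∈ Finset.Icc 1 j, f k := by
  rw [Finset.range_eq_Ico, Finset.sum_eq_sum_Ico_succ_bot (by omega), Finset.Ico_add_one_right_eq_Icc]

lemma sum_wlo (q : ℝ) (j : ℕ) : ∑ i ∈ Finset.range (j+1), wlo q j i = 1 := by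
  rw [range_split]
  have h0 : wlo q j 0 = (1-q)^j := by rw [wlo, if_pos rfl]
  have h1 : ∑ i ∈ Finset.Icc 1 j, wlo q j i
      = ∑ t ∈ Finset.range j, q*(1-q)^t := by
    rw [← Finset.Ico_add_one_right_eq_Icc, Finset.sum_Ico_eq_sum_range, Nat.add_sub_cancel]
    have e : ∀ t ∈ Finset.range j, wlo q j (1+t) = q*(1-q)^(j-1-t) := by
      intro t ht
      rw [wlo, if_neg (by omega), show j - (1+t) = j-1-t by omega]
    rw [Finset.sum_congr rfl e, Finset.sum_range_reflect (fun t => q*(1-q)^t) j]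
  rw [h0, h1, geom_aux]; ring

lemma sum_whi (q : ℝ) (m j : ℕ) (hm : 2 ≤ m) (hj : j ≤ m - 2) :
    ∑ k ∈ Finset.Ico (j+1) m, whi q m j k = 1 := by
  rw [ico_split (by omega) (by omega)]
  have h0 : whi q m j (m-1) = (1-q)^(m-j-2) := by rw [whi, if_pos rfl]
  have h1 : ∑ k ∈ Finset.Ico (j+1) (m-1), whi q m j k
      = ∑ t ∈ Finset.range (m-2-j), q*(1-q)^t := by
    rw [Finset.sum_Ico_eq_sum_range, show m - 1 - (j+1) = m - 2 - j by omega]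
    refine Finset.sum_congr rfl fun t ht => ?_
    have ht' : t < m - 2 - j := Finset.mem_range.mp ht
    rw [whi, if_neg (by omega), show j + 1 + t - j - 1 = t by omega]
  rw [h0, h1, geom_aux, show m - j - 2 = m - 2 - j by omega]; ring

lemma rqm_lo (X : ℝ) (m : ℕ) (q : ℝ) (j : ℕ) (x : ℝ) (hm : 2 ≤ m) (hj : j ≤ m - 2)
    (i : ℕ) (hi : i ≤ j) :
    rqmProbJ X m q j x i = ∑ k ∈ Finset.Ico (j+1) m, wlo q j i * whi q m j k *
      ((Bgrid X m k - x) / (Bgrid X m k - Bgrid X m i)) := by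
  rw [ico_split (by omega) (by omega)]
  have hw' : ∀ k ∈ Finset.Ico (j+1) (m-1),
      wlo q j i * whi q m j k * ((Bgrid X m k - x) / (Bgrid X m k - Bgrid X m i))
      = wlo q j i * (q * (1-q)^(k-j-1) * (Bgrid X m k - x) / (Bgrid X m k - Bgrid X m i)) := by
    intro k hk
    have hk' : k ≠ m - 1 := by have := Finset.mem_Ico.mp hk; omega
    rw [whi, if_neg hk']; ring
  rw [Finset.sum_congr rfl hw', ← Finset.mul_sum,
    show whi q m j (m-1) = (1-q)^(m-j-2) from by rw [whi, if_pos rfl]]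
  simp only [rqmProbJ]
  by_cases h0 : i = 0
  · rw [if_pos h0, show wlo q j i = (1-q)^j from by rw [wlo, if_pos h0]]
    ring
  · rw [if_neg h0, if_pos hi, show wlo q j i = q*(1-q)^(j-i) from by rw [wlo, if_neg h0]]
    ring

lemma rqm_hi (X : ℝ) (m : ℕ) (q : ℝ) (j : ℕ) (x : ℝ) (hm : 2 ≤ m) (hj : j ≤ m - 2)
    (i : ℕ) (hi : j < i) (hi' : i < m) :
    rqmProbJ X m q j x i = ∑ k ∈ Finset.range (j+1), whi q m j i * wlo q j k *
      ((x - Bgrid X m k) / (Bgrid X m i - Bgrid X m k)) := by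
  rw [range_split]
  have hw' : ∀ k ∈ Finset.Icc 1 j,
      whi q m j i * wlo q j k * ((x - Bgrid X m k) / (Bgrid X m i - Bgrid X m k))
      = whi q m j i * (q * (1-q)^(j-k) * (x - Bgrid X m k) / (Bgrid X m i - Bgrid X m k)) := by
    intro k hk
    have hk' : k ≠ 0 := by have := Finset.mem_Icc.mp hk; omega
    rw [wlo, if_neg hk']; ring
  rw [Finset.sum_congr rfl hw', ← Finset.mul_sum,
    show wlo q j 0 = (1-q)^j from by rw [wlo, if_pos rfl]]
  simp only [rqmProbJ]
  have h0 : i ≠ 0 := by omega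
  have h1 : ¬ i ≤ j := by omega
  by_cases h2 : i = m - 1
  · rw [if_neg h0, if_neg h1, if_pos h2,
      show whi q m j i = (1-q)^(m-j-2) from by rw [whi, if_pos h2],
      show i - j - 1 = m - j - 2 from by omega]
    ring
  · rw [if_neg h0, if_neg h1, if_neg h2,
      show whi q m j i = q*(1-q)^(i-j-1) from by rw [whi, if_neg h2]]
    ring


/-- The RQM output probabilities are nonnegative and sum to one. -/
theorem rqm_prob_is_distribution (X : ℝ) (hX : 0 < X)
    (m : ℕ) (hm : 2 ≤ m) (q : ℝ) (hq : q ∈ Set.Ioo (0:ℝ) 1)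
    (j : ℕ) (hj : j ≤ m - 2) (x : ℝ)
    (hx : Bgrid X m j ≤ x ∧ x < Bgrid X m (j+1)) :
    (∀ i < m, 0 ≤ rqmProbJ X m q j x i) ∧
      ∑ i ∈ Finset.range m, rqmProbJ X m q j x i = 1 := by
  obtain ⟨hq0, hq1⟩ := hq
  have hq0' : (0:ℝ) ≤ q := hq0.le
  have hq1' : (0:ℝ) ≤ 1 - q := by linarith
  have hwlo : ∀ i, 0 ≤ wlo q j i := by
    intro i; unfold wlo; split <;> positivity
  have hwhi : ∀ k, 0 ≤ whi q m j k := by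
    intro k; unfold whi; split <;> positivity
  have hxk : ∀ k, j + 1 ≤ k → 0 ≤ Bgrid X m k - x := by
    intro k hk
    have := Bgrid_le X hX m hm hk
    linarith [hx.2]
  have hxk' : ∀ k, k ≤ j → 0 ≤ x - Bgrid X m k := by
    intro k hk
    have := Bgrid_le X hX m hm hk
    linarith [hx.1]
  have hden : ∀ i k : ℕ, i < k → 0 < Bgrid X m k - Bgrid X m i := by
    intro i k h; have := Bgrid_lt X hX m hm h; linarith
  constructor
  · intro i hi
    by_cases hij : i ≤ j
    · rw [rqm_lo X m q j x hm hj i hij]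
      refine Finset.sum_nonneg fun k hk => ?_
      have hk' : j + 1 ≤ k := (Finset.mem_Ico.mp hk).1
      have h1 := hden i k (by omega)
      have h2 := hxk k hk'
      have h3 := hwlo i
      have h4 := hwhi k
      positivity
    · rw [rqm_hi X m q j x hm hj i (by omega) hi]
      refine Finset.sum_nonneg fun k hk => ?_
      have hk' : k ≤ j := by have := Finset.mem_range.mp hk; omega
      have h1 := hden k i (by omega)
      have h2 := hxk' k hk'
      have h3 := hwlo k
      have h4 := hwhi i
      positivity
  · have hjm : j + 1 ≤ m := by omega
    rw [Finset.range_eq_Ico, ← Finset.sum_Ico_consecutive _ (Nat.zero_le (j+1)) hjm,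
      ← Finset.range_eq_Ico]
    have e1 : ∑ i ∈ Finset.range (j+1), rqmProbJ X m q j x i
        = ∑ i ∈ Finset.range (j+1), ∑ k ∈ Finset.Ico (j+1) m, wlo q j i * whi q m j k *
          ((Bgrid X m k - x) / (Bgrid X m k - Bgrid X m i)) :=
      Finset.sum_congr rfl fun i hi =>
        rqm_lo X m q j x hm hj i (by have := Finset.mem_range.mp hi; omega)
    have e2 : ∑ i ∈ Finset.Ico (j+1) m, rqmProbJ X m q j x i
        = ∑ i ∈ Finset.range (j+1), ∑ k ∈ Finset.Ico (j+1) m, whi q m j k * wlo q j i *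
          ((x - Bgrid X m i) / (Bgrid X m k - Bgrid X m i)) := by
      have e2' : ∀ i ∈ Finset.Ico (j+1) m, rqmProbJ X m q j x i
          = ∑ k ∈ Finset.range (j+1), whi q m j i * wlo q j k *
            ((x - Bgrid X m k) / (Bgrid X m i - Bgrid X m k)) := fun i hi => by
        have h := Finset.mem_Ico.mp hi
        exact rqm_hi X m q j x hm hj i (by omega) h.2
      rw [Finset.sum_congr rfl e2']
      exact Finset.sum_comm
    rw [e1, e2, ← Finset.sum_add_distrib]
    have e3 : ∀ i ∈ Finset.range (j+1),
        ((∑ k ∈ Finset.Ico (j+1) m, wlo q j i * whi q m j k *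
            ((Bgrid X m k - x) / (Bgrid X m k - Bgrid X m i)))
          + ∑ k ∈ Finset.Ico (j+1) m, whi q m j k * wlo q j i *
            ((x - Bgrid X m i) / (Bgrid X m k - Bgrid X m i)))
        = ∑ k ∈ Finset.Ico (j+1) m, wlo q j i * whi q m j k := by
      intro i hi
      rw [← Finset.sum_add_distrib]
      refine Finset.sum_congr rfl fun k hk => ?_
      have hik : i < k := by
        have := Finset.mem_range.mp hi
        have := (Finset.mem_Ico.mp hk).1
        omega
      have hne : Bgrid X m k - Bgrid X m i ≠ 0 := ne_of_gt (hden i k hik)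
      calc wlo q j i * whi q m j k * ((Bgrid X m k - x) / (Bgrid X m k - Bgrid X m i))
            + whi q m j k * wlo q j i * ((x - Bgrid X m i) / (Bgrid X m k - Bgrid X m i))
          = wlo q j i * whi q m j k *
            (((Bgrid X m k - x) + (x - Bgrid X m i)) / (Bgrid X m k - Bgrid X m i)) := by
            rw [add_div]; ring
        _ = wlo q j i * whi q m j k := by
            rw [show Bgrid X m k - x + (x - Bgrid X m i) = Bgrid X m k - Bgrid X m i from
              by ring, div_self hne, mul_one]
    rw [Finset.sum_congr rfl e3, ← Finset.sum_mul_sum, sum_wlo, sum_whi q m j hm hj, one_mul]
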